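/- arXiv:1809.09780 — 3 statements merged into one kernel-verified Lean document; each statement's English description precedes it below -/
import Mathlib

section
/- Let τ be an ergodic invertible measure-preserving transformation of a nonatomic standard probability space, and let (ε_n) be a sequence with 0 < ε_n < 1/2 for all n and ε_n decreasing to 0. Then there exists a measurable set E with m(E) > 0 such that m(⋃_{k=1}^n τ^k(E)) ≤ 1 − ε_n for every n ≥ 1. -/
open MeasureTheory Filter Set Topology
open scoped ENNReal

lemma aux_real (ν : Measure ℝ) [IsProbabilityMeasure ν] [NullSingletonClass ν] {c : ℝ≥0∞} (hc : 0 < c) :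
    ∃ B : Set ℝ, MeasurableSet B ∧ 0 < ν B ∧ ν B ≤ c := by
  by_cases hZ : ∃ t : ℝ, ν (Iic t) = 0
  · set Z : Set ℝ := {t | ν (Iic t) = 0} with hZdef
    have hZne : Z.Nonempty := hZ
    have htop : Tendsto (fun t : ℝ => ν (Iic t)) atTop (𝓝 1) := by
      have := tendsto_measure_iUnion_atTop (μ := ν) (s := fun t : ℝ => Iic t)
        (fun a b hab => Iic_subset_Iic.2 hab)
      simpa only [Function.comp_def, iUnion_Iic, measure_univ] using this
    obtain ⟨T, hT⟩ : ∃ T : ℝ, (0:ℝ≥0∞) < ν (Iic T) :=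
      (htop.eventually (eventually_gt_nhds (by norm_num : (0:ℝ≥0∞) < 1))).exists
    have hZbdd : BddAbove Z := by
      refine ⟨T, fun t ht => ?_⟩
      by_contra hlt
      push_neg at hlt
      have hle : ν (Iic T) ≤ ν (Iic t) := measure_mono (Iic_subset_Iic.2 hlt.le)
      rw [ht] at hle
      exact absurd (le_antisymm hle (zero_le)) hT.ne'
    set t₀ := sSup Z with ht₀
    have ht₀Z : ν (Iic t₀) = 0 := by
      have hIio : ν (Iio t₀) = 0 := by
        have hsub : Iio t₀ ⊆ ⋃ m : ℕ, Iic (t₀ - (1/(m+1) : ℝ)) := by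
          intro x hx
          obtain ⟨m, hm⟩ := exists_nat_one_div_lt (show (0:ℝ) < t₀ - x from sub_pos.2 hx)
          exact mem_iUnion.2 ⟨m, by simp only [mem_Iic]; push_cast at hm ⊢; linarith⟩
        refine measure_mono_null hsub (measure_iUnion_null fun m => ?_)
        obtain ⟨z, hz, hzl⟩ := exists_lt_of_lt_csSup hZne
          (show t₀ - (1/(m+1):ℝ) < t₀ by
            have : (0:ℝ) < 1/(m+1) := by positivity
            linarith)
        exact measure_mono_null (Iic_subset_Iic.2 hzl.le) hz
      have hle : ν (Iic t₀) ≤ ν (Iio t₀) + ν {t₀} := by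
        rw [← Iio_union_right]; exact measure_union_le _ _
      exact le_antisymm (by simpa [hIio] using hle) (zero_le)
    have hpos : ∀ m : ℕ, 0 < ν (Ioc t₀ (t₀ + (2⁻¹:ℝ)^m)) := by
      intro m
      have hgt : t₀ < t₀ + (2⁻¹:ℝ)^m := by
        have : (0:ℝ) < (2⁻¹:ℝ)^m := by positivity
        linarith
      have hnz : ν (Iic (t₀ + (2⁻¹:ℝ)^m)) ≠ 0 := by
        intro h0
        have : t₀ + (2⁻¹:ℝ)^m ≤ t₀ := le_csSup hZbdd h0
        linarith
      have hsplit : ν (Iic (t₀ + (2⁻¹:ℝ)^m)) ≤ ν (Iic t₀) + ν (Ioc t₀ (t₀ + (2⁻¹:ℝ)^m)) := by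
        rw [← Iic_union_Ioc_eq_Iic hgt.le]; exact measure_union_le _ _
      rw [ht₀Z, zero_add] at hsplit
      have : ν (Ioc t₀ (t₀ + (2⁻¹:ℝ)^m)) ≠ 0 := by
        intro h
        exact hnz (le_antisymm (hsplit.trans h.le) (zero_le))
      exact (zero_le).lt_of_ne (Ne.symm this)
    have hantiC : Antitone (fun m : ℕ => Ioc t₀ (t₀ + (2⁻¹:ℝ)^m)) := by
      intro a b hab
      apply Ioc_subset_Ioc le_rfl
      have := pow_le_pow_of_le_one (by norm_num : (0:ℝ) ≤ 2⁻¹) (by norm_num : (2⁻¹:ℝ) ≤ 1) hab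
      linarith
    have hintC : ⋂ m : ℕ, Ioc t₀ (t₀ + (2⁻¹:ℝ)^m) = ∅ := by
      ext x
      simp only [mem_iInter, mem_Ioc, mem_empty_iff_false, iff_false, not_forall]
      by_cases hx : t₀ < x
      · obtain ⟨m, hm⟩ := exists_pow_lt_of_lt_one (sub_pos.2 hx) (by norm_num : (2⁻¹:ℝ) < 1)
        exact ⟨m, fun h => absurd h.2 (by linarith)⟩
      · exact ⟨0, fun h => hx h.1⟩
    have htendC : Tendsto (fun m : ℕ => ν (Ioc t₀ (t₀ + (2⁻¹:ℝ)^m))) atTop (𝓝 0) := by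
      have := tendsto_measure_iInter_atTop (μ := ν)
        (fun m : ℕ => measurableSet_Ioc.nullMeasurableSet) hantiC ⟨0, measure_ne_top _ _⟩
      simpa only [Function.comp_def, hintC, measure_empty] using this
    obtain ⟨m, hm⟩ := (htendC.eventually (eventually_lt_nhds hc)).exists
    exact ⟨Ioc t₀ (t₀ + (2⁻¹:ℝ)^m), measurableSet_Ioc, hpos m, hm.le⟩
  · push_neg at hZ
    have hanti : Antitone (fun m : ℕ => Iic (-(m:ℝ))) := by
      intro a b hab x hx
      simp only [mem_Iic] at *
      have : (a:ℝ) ≤ b := by exact_mod_cast hab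
      linarith
    have hint : ⋂ m : ℕ, Iic (-(m:ℝ)) = ∅ := by
      ext x; simp only [mem_iInter, mem_Iic, mem_empty_iff_false, iff_false, not_forall]
      obtain ⟨m, hm⟩ := exists_nat_gt (-x)
      exact ⟨m, by push_neg; linarith⟩
    have htend : Tendsto (fun m : ℕ => ν (Iic (-(m:ℝ)))) atTop (𝓝 0) := by
      have := tendsto_measure_iInter_atTop (μ := ν)
        (fun m : ℕ => measurableSet_Iic.nullMeasurableSet) hanti ⟨0, measure_ne_top _ _⟩
      simpa only [Function.comp_def, hint, measure_empty] using this
    obtain ⟨m, hm⟩ := (htend.eventually (eventually_lt_nhds hc)).exists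
    exact ⟨Iic (-(m:ℝ)), measurableSet_Iic, (zero_le).lt_of_ne (fun h => hZ _ h.symm), hm.le⟩

lemma aux_small {X : Type*} [MeasurableSpace X] [StandardBorelSpace X]
    (μ : Measure X) [IsProbabilityMeasure μ] [NullSingletonClass μ] {c : ℝ≥0∞} (hc : 0 < c) :
    ∃ G : Set X, MeasurableSet G ∧ 0 < μ G ∧ μ G ≤ c := by
  set f := MeasureTheory.embeddingReal X with hf
  have hemb : MeasurableEmbedding f := MeasureTheory.measurableEmbedding_embeddingReal X
  set ν := μ.map f with hν
  have hmap : ∀ s : Set ℝ, MeasurableSet s → ν s = μ (f ⁻¹' s) := fun s hs =>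
    Measure.map_apply hemb.measurable hs
  have : IsProbabilityMeasure ν := Measure.isProbabilityMeasure_map hemb.measurable.aemeasurable
  have : NullSingletonClass ν := by
    constructor
    intro y
    rw [hmap _ (measurableSet_singleton y)]
    have : (f ⁻¹' {y}).Subsingleton := fun a ha b hb =>
      hemb.injective (by simpa using ha ▸ hb ▸ rfl)
    exact this.measure_zero μ
  obtain ⟨B, hBm, hBpos, hBle⟩ := aux_real ν hc
  refine ⟨f ⁻¹' B, hemb.measurable hBm, ?_, ?_⟩
  · rwa [← hmap _ hBm]
  · rwa [← hmap _ hBm]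

lemma step_lemma {X : Type*} [MeasurableSpace X] [StandardBorelSpace X]
    (μ : Measure X) [IsProbabilityMeasure μ] [NullSingletonClass μ]
    {Φ : X → X} (herg : Ergodic Φ μ)
    (ε : ℕ → ℝ) (A : Set X) (hA : MeasurableSet A) (N₀ N : ℕ)
    (η ς : ℝ≥0∞) (hης : η + ς < 1) (hς : 0 < ς)
    (hεη : ∀ n, N₀ < n → n ≤ N → ENNReal.ofReal (ε n) ≤ η) :
    ∃ B : Set X, MeasurableSet B ∧ B ⊆ A ∧ μ (A \ B) ≤ η + ς ∧
      ∀ n, N₀ < n → n ≤ N →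
        μ (⋃ k ∈ Finset.Icc 1 n, Φ^[k] ⁻¹' B) ≤ 1 - ENNReal.ofReal (ε n) := by
  have hΦ : Measurable Φ := herg.measurable
  have hmp : MeasurePreserving Φ μ μ := herg.toMeasurePreserving
  -- a small set G
  have hcpos : (0:ℝ≥0∞) < ς / (N+1) :=
    ENNReal.div_pos hς.ne' (by simp)
  obtain ⟨G, hGm, hGpos, hGle⟩ := aux_small μ hcpos
  have hNG : ((N:ℝ≥0∞)+1) * μ G ≤ ς := by
    calc ((N:ℝ≥0∞)+1) * μ G ≤ ((N:ℝ≥0∞)+1) * (ς / ((N:ℝ≥0∞)+1)) := by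
          exact mul_le_mul_right (by exact_mod_cast hGle) _
      _ = ς := ENNReal.mul_div_cancel' (by simp) (by simp)
  have hGtop : ((N:ℝ≥0∞)+1) * μ G ≠ ∞ :=
    ENNReal.mul_ne_top (by simp) (measure_ne_top μ G)
  -- the sets U t
  set U : ℕ → Set X := fun t => ⋃ k ∈ Finset.Icc 1 t, Φ^[k] ⁻¹' G with hU
  have hUm : ∀ t, MeasurableSet (U t) := fun t =>
    MeasurableSet.biUnion (Finset.Icc 1 t).countable_toSet
      (fun k _ => (hΦ.iterate k) hGm)
  have hUmono : Monotone U := by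
    intro a b hab x hx
    simp only [hU, mem_iUnion, Finset.mem_Icc] at hx ⊢
    obtain ⟨k, ⟨h1, h2⟩, hkx⟩ := hx
    exact ⟨k, ⟨h1, h2.trans hab⟩, hkx⟩
  have hU0 : U 0 = ∅ := by
    ext x
    have h : Finset.Icc 1 0 = ∅ := Finset.Icc_eq_empty (by omega)
    simp only [hU, h]
    simp
  have hUiUnion : (⋃ t, U t) = ⋃ k, ⋃ (_ : 1 ≤ k), Φ^[k] ⁻¹' G := by
    ext x
    simp only [hU, mem_iUnion, Finset.mem_Icc]
    exact ⟨fun ⟨t, k, ⟨h1, _⟩, hx⟩ => ⟨k, h1, hx⟩, fun ⟨k, h1, hx⟩ => ⟨k, k, ⟨h1, le_rfl⟩, hx⟩⟩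
  -- ergodic sweeping: the full union has measure one
  have hUfull : μ (⋃ t, U t) = 1 := by
    rw [hUiUnion]
    set S : Set X := ⋃ k, ⋃ (_ : 1 ≤ k), Φ^[k] ⁻¹' G with hS
    have hSm : MeasurableSet S :=
      MeasurableSet.iUnion fun k => MeasurableSet.iUnion fun _ => (hΦ.iterate k) hGm
    have hsub : Φ ⁻¹' S ⊆ S := by
      intro x hx
      simp only [hS, mem_preimage, mem_iUnion] at hx ⊢
      obtain ⟨k, hk, hkx⟩ := hx
      exact ⟨k+1, le_add_self.trans' (by omega), by
        rwa [Function.iterate_succ_apply]⟩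
    rcases herg.ae_empty_or_univ_of_preimage_ae_le hSm.nullMeasurableSet
        (HasSubset.Subset.eventuallyLE hsub) with h | h
    · exfalso
      have h0 : μ S = 0 := by
        rw [measure_congr h]; simp
      have : μ (Φ^[1] ⁻¹' G) ≤ μ S := measure_mono (subset_iUnion₂ (s := fun k _ => Φ^[k] ⁻¹' G) 1 le_rfl)
      rw [h0] at this
      have hμ1 : μ (Φ^[1] ⁻¹' G) = μ G := (hmp.iterate 1).measure_preimage hGm.nullMeasurableSet
      rw [hμ1] at this
      exact hGpos.ne' (le_antisymm this (zero_le))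
    · rw [measure_congr h]; simp
  have htend : Tendsto (fun t => μ (U t)) atTop (𝓝 1) := by
    have := tendsto_measure_iUnion_atTop (μ := μ) hUmono
    rw [hUfull] at this
    exact this
  -- the threshold η'
  set η' : ℝ≥0∞ := η + ((N:ℝ≥0∞)+1) * μ G with hη'
  have hη'lt : η' < 1 := lt_of_le_of_lt (add_le_add_right hNG η) hης
  have hex : ∃ ℓ, η' ≤ μ (U (ℓ+1)) := by
    obtain ⟨t, ht⟩ := (htend.eventually (eventually_ge_nhds hη'lt)).exists
    exact ⟨t, ht.trans (measure_mono (hUmono (Nat.le_succ t)))⟩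
  obtain ⟨L, hL, hUL⟩ : ∃ L, η' ≤ μ (U (L+1)) ∧ μ (U L) ≤ η' := by
    classical
    refine ⟨Nat.find hex, Nat.find_spec hex, ?_⟩
    rcases Nat.eq_zero_or_pos (Nat.find hex) with h0 | hpos'
    · rw [h0, hU0]; simp
    · obtain ⟨L', hE⟩ : ∃ L', Nat.find hex = L' + 1 := ⟨Nat.find hex - 1, by omega⟩
      rw [hE]
      have := Nat.find_min hex (m := L') (by omega)
      exact (lt_of_not_ge this).le
  -- the sets
  set Mid : Set X := U L \ Φ ⁻¹' G with hMid
  refine ⟨A \ Mid, hA.diff ((hUm L).diff (hΦ hGm)), diff_subset, ?_, ?_⟩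
  · have : A \ (A \ Mid) ⊆ U L := by
      rw [Set.diff_diff_right_self]
      exact inter_subset_right.trans diff_subset
    exact (measure_mono this).trans (hUL.trans (add_le_add_right hNG η))
  · intro n hn1 hn2
    set P : Set X := U (L+1) \ U (n+1) with hP
    -- key pointwise fact
    have hkey : ∀ x ∈ P, ∀ k, 1 ≤ k → k ≤ n → Φ^[k] x ∈ Mid := by
      rintro x ⟨hxU, hxn⟩ k hk1 hk2
      simp only [hU, mem_iUnion, Finset.mem_Icc] at hxU
      obtain ⟨s, ⟨hs1, hs2⟩, hsx⟩ := hxU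
      have hsn : n + 2 ≤ s := by
        by_contra hcon
        exact hxn (mem_biUnion (Finset.mem_Icc.mpr ⟨by omega, by omega⟩) hsx)
      constructor
      · have heq : Φ^[s-k] (Φ^[k] x) = Φ^[s] x := by
          rw [← Function.iterate_add_apply]
          congr 1; omega
        have hmem : Φ^[k] x ∈ Φ^[s-k] ⁻¹' G := by
          rw [mem_preimage, heq]; exact hsx
        exact mem_biUnion (Finset.mem_Icc.mpr ⟨by omega, by omega⟩) hmem
      · intro hmem
        have hmem' : Φ^[k+1] x ∈ G := by
          rw [Function.iterate_succ_apply']; exact hmem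
        exact hxn (mem_biUnion (Finset.mem_Icc.mpr ⟨by omega, by omega⟩) hmem')
    -- measure of P is at least η
    have hUn1 : μ (U (n+1)) ≤ ((N:ℝ≥0∞)+1) * μ G := by
      have h1 : μ (U (n+1)) ≤ ∑ k ∈ Finset.Icc 1 (n+1), μ (Φ^[k] ⁻¹' G) :=
        measure_biUnion_finset_le _ _
      have h2 : ∀ k ∈ Finset.Icc 1 (n+1), μ (Φ^[k] ⁻¹' G) = μ G := fun k _ =>
        (hmp.iterate k).measure_preimage hGm.nullMeasurableSet
      rw [Finset.sum_congr rfl h2, Finset.sum_const, Nat.card_Icc, nsmul_eq_mul] at h1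
      refine h1.trans (mul_le_mul_left ?_ _)
      have h3 : n + 1 + 1 - 1 = n + 1 := by omega
      rw [h3]
      push_cast
      exact add_le_add_left (Nat.cast_le.mpr hn2) 1
    have hPη : η ≤ μ P := by
      have h1 : μ (U (L+1)) ≤ μ P + μ (U (n+1)) :=
        (measure_mono (subset_diff_union _ _)).trans (measure_union_le _ _)
      have h2 : η + ((N:ℝ≥0∞)+1) * μ G ≤ μ P + ((N:ℝ≥0∞)+1) * μ G :=
        hL.trans (h1.trans (add_le_add_right hUn1 _))
      exact (ENNReal.add_le_add_iff_right hGtop).mp h2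
    -- disjointness
    have hd : Disjoint (⋃ k ∈ Finset.Icc 1 n, Φ^[k] ⁻¹' (A \ Mid)) P := by
      rw [disjoint_left]
      intro x hx hxP
      simp only [mem_iUnion, Finset.mem_Icc, mem_preimage] at hx
      obtain ⟨k, ⟨hk1, hk2⟩, hkx⟩ := hx
      exact hkx.2 (hkey x hxP k hk1 hk2)
    have hPm : MeasurableSet P := (hUm (L+1)).diff (hUm (n+1))
    have hsum : μ (⋃ k ∈ Finset.Icc 1 n, Φ^[k] ⁻¹' (A \ Mid)) + μ P ≤ 1 := by
      rw [← measure_union hd hPm]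
      exact prob_le_one
    have hofReal : ENNReal.ofReal (ε n) ≤ μ P := (hεη n hn1 hn2).trans hPη
    have := le_trans (add_le_add_right hofReal _) hsum
    exact ENNReal.le_sub_of_add_le_right (by simp [ENNReal.ofReal_ne_top]) this

lemma exists_chain {α : Type*} (Inv : ℕ → α → Prop) (R : α → α → Prop)
    (hbase : ∃ p, Inv 0 p) (hstep : ∀ m p, Inv m p → ∃ q, Inv (m+1) q ∧ R p q) :
    ∃ f : ℕ → α, (∀ m, Inv m (f m)) ∧ ∀ m, R (f m) (f (m+1)) := by
  choose q hq hR using hstep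
  obtain ⟨p0, hp0⟩ := hbase
  let g : ∀ m : ℕ, {a : α // Inv m a} := fun m =>
    Nat.rec ⟨p0, hp0⟩ (fun m ih => ⟨q m ih.1 ih.2, hq m ih.1 ih.2⟩) m
  exact ⟨fun m => (g m).1, fun m => (g m).2, fun m => hR m (g m).1 (g m).2⟩

/-- The invariant carried along the inductive construction. -/
def SweepInv {X : Type*} [MeasurableSpace X] (μ : Measure X) (Φ : X → X) (ε : ℕ → ℝ)
    (e d : ℝ) (m : ℕ) (p : Set X × ℕ) : Prop :=
  MeasurableSet p.1 ∧
  μ p.1ᶜ ≤ ENNReal.ofReal (e + d * (2 - (2⁻¹:ℝ)^m)) ∧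
  ε (p.2 + 1) ≤ d * (2⁻¹:ℝ)^(m+2) ∧
  ∀ n, 1 ≤ n → n ≤ p.2 →
    μ (⋃ k ∈ Finset.Icc 1 n, Φ^[k] ⁻¹' p.1) ≤ 1 - ENNReal.ofReal (ε n)


/-- Slowly sweeping-out sets: for ergodic τ and εₙ ∈ (0, 1/2) decreasing to 0 there is a
set E of positive measure with m(⋃_{k=1}^n τ^k(E)) ≤ 1 - εₙ for all n ≥ 1. -/
theorem stmt_7 {X : Type*} [MeasurableSpace X] [StandardBorelSpace X]
    (μ : Measure X) [IsProbabilityMeasure μ] [NullSingletonClass μ]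
    (τ : X ≃ᵐ X) (hτ : Ergodic τ μ)
    (ε : ℕ → ℝ) (hpos : ∀ n, 0 < ε n) (hhalf : ∀ n, ε n < 1 / 2)
    (hmono : Antitone ε) (hlim : Tendsto ε atTop (nhds 0)) :
    ∃ E : Set X, MeasurableSet E ∧ 0 < μ E ∧
      ∀ n : ℕ, 1 ≤ n →
        μ (⋃ k ∈ Finset.Icc 1 n, (⇑τ.symm)^[k] ⁻¹' E) ≤ 1 - ENNReal.ofReal (ε n) := by
  have hmpΦ : MeasurePreserving (⇑τ.symm) μ μ := MeasurePreserving.symm τ hτ.toMeasurePreserving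
  have hergΦ : Ergodic (⇑τ.symm) μ := by
    refine ⟨hmpΦ, ⟨fun s hs hinv => hτ.aeconst_set hs ?_⟩⟩
    conv_lhs => rw [← hinv]
    rw [← Set.preimage_comp, MeasurableEquiv.symm_comp_self, Set.preimage_id]
  set e : ℝ := ε 1 with he
  have he2 : e < 1/2 := hhalf 1
  have he0 : 0 < e := hpos 1
  set d : ℝ := 1/4 - e/2 with hd
  have hd0 : 0 < d := by rw [hd]; linarith
  have hd4 : d ≤ 1/4 := by rw [hd]; linarith
  have hsmall : ∀ b : ℝ, 0 < b → ∀ M₀ : ℕ, ∃ M : ℕ, M₀ < M ∧ ε (M + 1) ≤ b := by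
    intro b hb M₀
    obtain ⟨M₁, hM₁⟩ := Filter.eventually_atTop.mp (hlim.eventually (eventually_le_nhds hb))
    refine ⟨max M₁ (M₀ + 1), lt_of_lt_of_le (Nat.lt_succ_self M₀) (le_max_right _ _), ?_⟩
    exact hM₁ _ (le_trans (le_max_left _ _) (Nat.le_succ _))
  -- base stage
  have hbase : ∃ p, SweepInv μ (⇑τ.symm) ε e d 0 p := by
    obtain ⟨N₀, hN₀pos, hN₀ε⟩ := hsmall (d * (2⁻¹:ℝ)^2) (by positivity) 0
    obtain ⟨B, hBm, hBsub, hBrem, hBbound⟩ := step_lemma μ hergΦ ε univ MeasurableSet.univ 0 N₀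
      (ENNReal.ofReal e) (ENNReal.ofReal d)
      (by rw [← ENNReal.ofReal_add he0.le hd0.le]
          exact ENNReal.ofReal_lt_one.mpr (by rw [hd]; linarith))
      (ENNReal.ofReal_pos.mpr hd0)
      (fun n hn _ => ENNReal.ofReal_le_ofReal (hmono hn))
    refine ⟨(B, N₀), hBm, ?_, by simpa using hN₀ε, fun n hn1 hn2 => hBbound n hn1 hn2⟩
    have h1 : Bᶜ = univ \ B := by rw [compl_eq_univ_diff]
    rw [h1]
    refine hBrem.trans ?_
    rw [← ENNReal.ofReal_add he0.le hd0.le]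
    exact ENNReal.ofReal_le_ofReal (by norm_num)
  -- inductive step
  have hstep : ∀ m p, SweepInv μ (⇑τ.symm) ε e d m p →
      ∃ q, SweepInv μ (⇑τ.symm) ε e d (m+1) q ∧ (q.1 ⊆ p.1 ∧ p.2 < q.2) := by
    intro m p hp
    obtain ⟨hpm, hpc, hpε, hpb⟩ := hp
    obtain ⟨N', hN'gt, hN'ε⟩ := hsmall (d * (2⁻¹:ℝ)^(m+3)) (by positivity) p.2
    have hqpos : (0:ℝ) < d * (2⁻¹:ℝ)^(m+2) := by positivity
    have hpow_le : (2⁻¹:ℝ)^(m+2) ≤ 1 := pow_le_one₀ (by norm_num) (by norm_num)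
    obtain ⟨B, hBm, hBsub, hBrem, hBbound⟩ := step_lemma μ hergΦ ε p.1 hpm p.2 N'
      (ENNReal.ofReal (d * (2⁻¹:ℝ)^(m+2))) (ENNReal.ofReal (d * (2⁻¹:ℝ)^(m+2)))
      (by rw [← ENNReal.ofReal_add hqpos.le hqpos.le]
          refine ENNReal.ofReal_lt_one.mpr ?_
          nlinarith)
      (ENNReal.ofReal_pos.mpr hqpos)
      (fun n hn1 hn2 => by
        refine ENNReal.ofReal_le_ofReal (le_trans ?_ hpε)
        exact hmono hn1)
    refine ⟨(B, N'), ⟨hBm, ?_, by simpa using hN'ε, ?_⟩, hBsub, hN'gt⟩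
    · -- measure of complement
      have hsub2 : Bᶜ ⊆ p.1ᶜ ∪ (p.1 \ B) := by
        intro x hx
        by_cases hxp : x ∈ p.1
        · exact Or.inr ⟨hxp, hx⟩
        · exact Or.inl hxp
      refine le_trans (measure_mono hsub2) (le_trans (measure_union_le _ _) ?_)
      refine le_trans (add_le_add hpc hBrem) ?_
      have hm1 : (2⁻¹:ℝ)^m ≤ 1 := pow_le_one₀ (by norm_num) (by norm_num)
      rw [← ENNReal.ofReal_add hqpos.le hqpos.le, ← ENNReal.ofReal_add (by nlinarith) (by positivity)]
      refine ENNReal.ofReal_le_ofReal ?_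
      have hp1 : (2⁻¹:ℝ)^(m+1) = (2⁻¹:ℝ)^m * 2⁻¹ := pow_succ _ _
      have hp2 : (2⁻¹:ℝ)^(m+2) = (2⁻¹:ℝ)^m * 2⁻¹ * 2⁻¹ := by
        rw [pow_succ, pow_succ]
      rw [hp1, hp2]; ring_nf; linarith
    · -- the sweeping bounds
      intro n hn1 hn2
      by_cases hcase : n ≤ p.2
      · refine le_trans (measure_mono ?_) (hpb n hn1 hcase)
        exact iUnion₂_mono fun k _ => preimage_mono hBsub
      · exact hBbound n (by omega) hn2
  obtain ⟨f, hf, hfR⟩ := exists_chain (SweepInv μ (⇑τ.symm) ε e d)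
    (fun p q => q.1 ⊆ p.1 ∧ p.2 < q.2) hbase hstep
  refine ⟨⋂ m, (f m).1, MeasurableSet.iInter fun m => (hf m).1, ?_, ?_⟩
  · -- positive measure
    have hanti : Antitone fun m => (f m).1 := antitone_nat_of_succ_le fun m => (hfR m).1
    have hcm : Monotone fun m => ((f m).1)ᶜ := fun a b hab => compl_subset_compl.mpr (hanti hab)
    have hEc : (⋂ m, (f m).1)ᶜ = ⋃ m, ((f m).1)ᶜ := by rw [compl_iInter]
    have hbound : μ ((⋂ m, (f m).1)ᶜ) ≤ ENNReal.ofReal (e + 2*d) := by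
      rw [hEc, hcm.directed_le.measure_iUnion]
      refine iSup_le fun m => le_trans (hf m).2.1 (ENNReal.ofReal_le_ofReal ?_)
      have : (0:ℝ) ≤ (2⁻¹:ℝ)^m := by positivity
      nlinarith
    have hhalf' : e + 2*d = 1/2 := by rw [hd]; ring
    rw [pos_iff_ne_zero]
    intro h0
    have hcompl : μ ((⋂ m, (f m).1)ᶜ) = 1 := by
      rw [prob_compl_eq_one_sub (MeasurableSet.iInter fun m => (hf m).1), h0, tsub_zero]
    rw [hcompl, hhalf'] at hbound
    exact absurd hbound (by simp [ENNReal.one_le_ofReal])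
  · intro n hn
    have hsm : StrictMono fun m => (f m).2 := strictMono_nat_of_lt_succ fun m => (hfR m).2
    have hle : n ≤ (f n).2 := hsm.le_apply
    refine le_trans (measure_mono ?_) ((hf n).2.2.2 n hn hle)
    exact iUnion₂_mono fun k _ => preimage_mono (iInter_subset _ n)
end

section
/- Let τ be a measure-preserving transformation of [0,1] (circle, Lebesgue measure) and suppose E is a measurable set with m(⋃_{k=1}^n τ^{-k}(E)) < 1 for all n ≥ 1. Let F = [0,1] \ E and f = 1_F − m(F). Then f is a bounded mean-zero function and ‖∑_{k=1}^n f ∘ τ^k‖_∞ ≥ n·m(E) for all n ≥ 1; consequently f is not a coboundary f = F' − F' ∘ τ with transfer function F' ∈ L^∞. -/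
open MeasureTheory Filter Set
open scoped ENNReal

/-- If E has m(⋃_{k=1}^n τ^{-k}(E)) < 1 for all n, then f = 1_{Eᶜ} - m(Eᶜ) is a bounded
mean-zero function with ‖Sₙf‖_∞ ≥ n·m(E), hence not a coboundary with L^∞ transfer
function when m(E) > 0. -/
theorem stmt_12 (τ : UnitAddCircle → UnitAddCircle) (hτ : MeasurePreserving τ volume volume)
    (E : Set UnitAddCircle) (hE : MeasurableSet E)
    (hsweep : ∀ n : ℕ, 1 ≤ n → volume (⋃ k ∈ Finset.Icc 1 n, τ^[k] ⁻¹' E) < 1)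
    (f : UnitAddCircle → ℝ)
    (hf : f = fun x => (Eᶜ).indicator (fun _ => (1 : ℝ)) x - (volume Eᶜ).toReal) :
    eLpNorm f ⊤ volume < ⊤ ∧ (∫ x, f x ∂volume) = 0 ∧
      (∀ n : ℕ, 1 ≤ n →
        ENNReal.ofReal ((n : ℝ) * (volume E).toReal) ≤
          eLpNorm (fun x => ∑ k ∈ Finset.Icc 1 n, f (τ^[k] x)) ⊤ volume) ∧
      (0 < volume E →
        ¬ ∃ F' : UnitAddCircle → ℝ, Measurable F' ∧ eLpNorm F' ⊤ volume < ⊤ ∧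
            ∀ᵐ x ∂(volume : Measure UnitAddCircle), f x = F' x - F' (τ x)) := by
  haveI : IsProbabilityMeasure (volume : Measure UnitAddCircle) := ⟨UnitAddCircle.measure_univ⟩
  have hEfin : volume E ≠ ⊤ := measure_ne_top _ _
  set c := (volume Eᶜ).toReal with hc
  have hc0 : 0 ≤ c := ENNReal.toReal_nonneg
  have hsum : (volume E).toReal = 1 - c := by
    rw [hc, measure_compl hE hEfin, measure_univ,
      ENNReal.toReal_sub_of_le prob_le_one ENNReal.one_ne_top]
    simp
  subst hf
  -- Part 1: boundedness
  have part1 : eLpNorm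
      (fun x => (Eᶜ).indicator (fun _ => (1 : ℝ)) x - c) ⊤ volume < ⊤ := by
    rw [eLpNorm_exponent_top]
    refine (eLpNormEssSup_le_of_ae_bound (C := 1 + c) (ae_of_all _ fun x => ?_)).trans_lt
      ENNReal.ofReal_lt_top
    calc ‖(Eᶜ).indicator (fun _ => (1 : ℝ)) x - c‖
        ≤ ‖(Eᶜ).indicator (fun _ => (1 : ℝ)) x‖ + ‖c‖ := norm_sub_le _ _
      _ ≤ 1 + c := by
          by_cases hx : x ∈ Eᶜ <;>
            simp [hx, Real.norm_eq_abs, abs_of_nonneg hc0]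
  -- Part 2: mean zero
  have part2 : (∫ x, ((Eᶜ).indicator (fun _ => (1 : ℝ)) x - c) ∂volume) = 0 := by
    rw [integral_sub ((integrable_indicator_iff hE.compl).2
      (by simp [integrableOn_const, measure_lt_top])) (integrable_const _)]
    simp [integral_indicator_const _ hE.compl, hc, measureReal_def]
  -- Part 3: lower bound on the sup norm of the ergodic sums
  have part3 : ∀ n : ℕ, 1 ≤ n →
      ENNReal.ofReal ((n : ℝ) * (volume E).toReal) ≤
        eLpNorm (fun x => ∑ k ∈ Finset.Icc 1 n,
          ((Eᶜ).indicator (fun _ => (1 : ℝ)) (τ^[k] x) - c)) ⊤ volume := by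
    intro n hn
    set S : UnitAddCircle → ℝ := fun x => ∑ k ∈ Finset.Icc 1 n,
        ((Eᶜ).indicator (fun _ => (1 : ℝ)) (τ^[k] x) - c) with hS
    set A : Set UnitAddCircle := ⋂ k ∈ Finset.Icc 1 n, τ^[k] ⁻¹' Eᶜ with hA
    have hAc : Aᶜ = ⋃ k ∈ Finset.Icc 1 n, τ^[k] ⁻¹' E := by
      simp [hA, compl_iInter, preimage_compl]
    have hApos : volume A ≠ 0 := by
      intro h0
      have h1 : (1 : ℝ≥0∞) = volume (univ : Set UnitAddCircle) := measure_univ.symm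
      have : (1 : ℝ≥0∞) ≤ volume A + volume Aᶜ := by
        rw [h1]; exact (measure_mono (by simp)).trans (measure_union_le A Aᶜ)
      rw [h0, zero_add, hAc] at this
      exact absurd this (not_le.2 (hsweep n hn))
    have hSA : ∀ x ∈ A, S x = (n : ℝ) * (volume E).toReal := by
      intro x hx
      have hterm : ∀ k ∈ Finset.Icc 1 n,
          ((Eᶜ).indicator (fun _ => (1 : ℝ)) (τ^[k] x) - c) = 1 - c := by
        intro k hk
        have hxk : τ^[k] x ∈ Eᶜ := mem_iInter₂.1 hx k hk
        rw [indicator_of_mem hxk]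
      have h2 : S x = ∑ _k ∈ Finset.Icc 1 n, (1 - c) := Finset.sum_congr rfl hterm
      rw [h2, Finset.sum_const, Nat.card_Icc]
      simp [hsum, mul_comm]
    have hae := ae_le_eLpNormEssSup (f := S) (μ := (volume : Measure UnitAddCircle))
    have hx : ∃ x ∈ A, (‖S x‖₊ : ℝ≥0∞) ≤ eLpNormEssSup S volume := by
      by_contra h
      push_neg at h
      have hnull : volume {y | ¬ ((‖S y‖₊ : ℝ≥0∞) ≤ eLpNormEssSup S volume)} = 0 :=
        ae_iff.mp hae
      exact hApos (measure_mono_null (fun y hyA => not_le.2 (h y hyA)) hnull)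
    obtain ⟨x, hxA, hxle⟩ := hx
    rw [eLpNorm_exponent_top]
    refine le_trans ?_ hxle
    rw [hSA x hxA]
    have h0 : 0 ≤ (n : ℝ) * (volume E).toReal := by positivity
    exact (Real.enorm_eq_ofReal h0).ge
  refine ⟨part1, part2, part3, ?_⟩
  -- Part 4: not a coboundary
  intro hE0
  rintro ⟨F', -, hF'bd, hcob⟩
  set C := eLpNormEssSup F' volume with hC
  have hCfin : C ≠ ⊤ := by
    rw [eLpNorm_exponent_top] at hF'bd; exact hF'bd.ne
  have hiter : ∀ k : ℕ, Measure.QuasiMeasurePreserving (τ^[k])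
      (volume : Measure UnitAddCircle) volume :=
    fun k => (hτ.iterate k).quasiMeasurePreserving
  set g : UnitAddCircle → ℝ := fun x => (Eᶜ).indicator (fun _ => (1 : ℝ)) x - c with hg
  have hbd : ∀ᵐ x ∂(volume : Measure UnitAddCircle),
      ∀ k : ℕ, (‖F' (τ^[k] x)‖₊ : ℝ≥0∞) ≤ C :=
    ae_all_iff.2 fun k =>
      (hiter k).ae (p := fun y => (‖F' y‖₊ : ℝ≥0∞) ≤ C) ae_le_eLpNormEssSup
  have hcob' : ∀ᵐ x ∂(volume : Measure UnitAddCircle),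
      ∀ k : ℕ, g (τ^[k] x) = F' (τ^[k] x) - F' (τ^[k+1] x) :=
    ae_all_iff.2 fun k => by
      filter_upwards [(hiter k).ae hcob] with x hx
      rw [hx, Function.iterate_succ_apply']
  have key : ∀ n : ℕ, 1 ≤ n →
      eLpNorm (fun x => ∑ k ∈ Finset.Icc 1 n, g (τ^[k] x)) ⊤ volume ≤ 2 * C := by
    intro n hn
    rw [eLpNorm_exponent_top]
    refine essSup_le_of_ae_le _ ?_
    filter_upwards [hbd, hcob'] with x hx1 hx2
    have htel : ∑ k ∈ Finset.Icc 1 n, g (τ^[k] x) = F' (τ^[1] x) - F' (τ^[n+1] x) := by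
      have h1 : ∑ k ∈ Finset.Icc 1 n, g (τ^[k] x)
          = ∑ k ∈ Finset.range n, (F' (τ^[k+1] x) - F' (τ^[k+2] x)) := by
        rw [← Finset.Ico_add_one_right_eq_Icc, Finset.sum_Ico_eq_sum_range]
        simp only [Nat.succ_sub_one, Nat.add_sub_cancel]
        refine Finset.sum_congr rfl fun k _ => ?_
        rw [hx2 (1 + k)]
        ring_nf
      rw [h1, Finset.sum_range_sub' (fun k => F' (τ^[k+1] x))]
    show (‖∑ k ∈ Finset.Icc 1 n, g (τ^[k] x)‖₊ : ℝ≥0∞) ≤ 2 * C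
    rw [htel]
    calc (‖F' (τ^[1] x) - F' (τ^[n+1] x)‖₊ : ℝ≥0∞)
        ≤ (‖F' (τ^[1] x)‖₊ : ℝ≥0∞) + ‖F' (τ^[n+1] x)‖₊ := by
          exact_mod_cast nnnorm_sub_le _ _
      _ ≤ C + C := add_le_add (hx1 1) (hx1 (n+1))
      _ = 2 * C := (two_mul C).symm
  have hEr : 0 < (volume E).toReal := ENNReal.toReal_pos hE0.ne' hEfin
  obtain ⟨n, hnlt⟩ := exists_nat_gt ((2 * C).toReal / (volume E).toReal)
  have hn0 : (0:ℝ) < n := lt_of_le_of_lt (div_nonneg ENNReal.toReal_nonneg hEr.le) hnlt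
  have hn1 : 1 ≤ n := Nat.cast_pos.mp hn0
  have h2 : ENNReal.ofReal ((n : ℝ) * (volume E).toReal) ≤ 2 * C :=
    (part3 n hn1).trans (key n hn1)
  have h3 : (n : ℝ) * (volume E).toReal ≤ (2 * C).toReal :=
    (ENNReal.ofReal_le_iff_le_toReal (ENNReal.mul_ne_top (by simp) hCfin)).mp h2
  rw [div_lt_iff₀ hEr] at hnlt
  linarith
end

section
/- Let τ be an ergodic invertible measure-preserving transformation of the circle [0,1) with Lebesgue measure, and suppose (ρ_n) is a decreasing sequence with ρ_n → 0 such that for almost every x there exists N(x) with: for all n ≥ N(x), the arcs of radius ρ_n centered at τ^1(x), …, τ^n(x) cover the circle. Then for almost every x, every point y not in the orbit {τ^k(x) : k ≥ 1} satisfies |y − τ^n(x)| ≤ ρ_n (mod 1) for infinitely many n. -/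
open MeasureTheory Filter Set

/-- If for a.e. x the arcs of radius ρₙ about τ¹(x), …, τⁿ(x) eventually cover the circle,
then for a.e. x every point y off the forward orbit satisfies dist(y, τⁿ(x)) ≤ ρₙ
infinitely often. -/
theorem stmt_16 (τ : UnitAddCircle → UnitAddCircle) (hτ : Ergodic τ volume)
    (ρ : ℕ → ℝ) (hρpos : ∀ n, 0 < ρ n) (hmono : Antitone ρ)
    (hlim : Tendsto ρ atTop (nhds 0))
    (hcover : ∀ᵐ x ∂(volume : Measure UnitAddCircle), ∃ N : ℕ, ∀ n, N ≤ n →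
      Set.univ ⊆ ⋃ k ∈ Finset.Icc 1 n, Metric.closedBall (τ^[k] x) (ρ n)) :
    ∀ᵐ x ∂(volume : Measure UnitAddCircle), ∀ y : UnitAddCircle,
      (∀ k : ℕ, 1 ≤ k → τ^[k] x ≠ y) →
      {n : ℕ | dist y (τ^[n] x) ≤ ρ n}.Infinite := by
  filter_upwards [hcover] with x hx y hy
  obtain ⟨N, hN⟩ := hx
  by_contra hfin
  rw [Set.not_infinite] at hfin
  obtain ⟨K, hK⟩ := hfin.bddAbove
  set M := max (max K N) 1 with hM
  have h1M : (1 : ℕ) ≤ M := le_max_right _ _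
  have hne : (Finset.Icc 1 M).Nonempty := ⟨1, Finset.mem_Icc.mpr ⟨le_refl 1, h1M⟩⟩
  set ε := (Finset.Icc 1 M).inf' hne (fun k => dist y (τ^[k] x)) with hε
  have hεpos : 0 < ε := by
    rw [hε, Finset.lt_inf'_iff]
    intro k hk
    rw [dist_pos]
    exact fun h => hy k (Finset.mem_Icc.mp hk).1 h.symm
  obtain ⟨m, hm, hmM⟩ :=
    ((hlim.eventually (gt_mem_nhds hεpos)).and (eventually_ge_atTop M)).exists
  have hy' := hN m (le_trans (le_trans (le_max_right K N) (le_max_left _ _)) hmM)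
    (Set.mem_univ y)
  simp only [Set.mem_iUnion, Metric.mem_closedBall, Finset.mem_Icc] at hy'
  obtain ⟨k, ⟨hk1, hkm⟩, hd⟩ := hy'
  by_cases hkM : k ≤ M
  · have : ε ≤ dist y (τ^[k] x) :=
      Finset.inf'_le _ (Finset.mem_Icc.mpr ⟨hk1, hkM⟩)
    linarith
  · push_neg at hkM
    have hdk : dist y (τ^[k] x) ≤ ρ k := le_trans hd (hmono hkm)
    have : k ≤ K := hK hdk
    have hKM : K ≤ M := le_trans (le_max_left K N) (le_max_left _ _)
    omega
end
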